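/- For every μ ∈ ℂ one has the exact identities ∫₀¹ e^{2iμt} σ₂(t) (K₁e)(t) dt = ∫₀¹ e^{2iμs} σ₁(s) (∫ₛ¹ e^{2iμ(t−s)} σ₂(t) dt)² ds and e^{2iμ} ∫₀¹ e^{−2iμt} σ₁(t) (K₂e)(t) dt = ∫₀¹ e^{2iμ(1−s)} σ₂(s) (∫₀ˢ e^{2iμ(s−t)} σ₁(t) dt)² ds. Consequently, for every r ≥ 0 and every μ ∈ ℂ with Im μ > −r, both |∫₀¹ e^{2iμt} σ₂(t) (K₁e)(t) dt| and |e^{2iμ} ∫₀¹ e^{−2iμt} σ₁(t) (K₂e)(t) dt| are at most e^{2r} γ̃(μ). -/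

import Mathlib

open MeasureTheory Set
open scoped ENNReal

noncomputable section

/-- The integral operator `K₁` associated with the Dirac system. -/
def K1 (σ₁ σ₂ : ℝ → ℂ) (μ : ℂ) (z : ℝ → ℂ) : ℝ → ℂ := fun x =>
  ∫ t in (0:ℝ)..x, σ₁ t * ∫ s in t..(1:ℝ),
    Complex.exp (2 * Complex.I * μ * (s - t)) * σ₂ s * z s

/-- The integral operator `K₂` associated with the Dirac system. -/
def K2 (σ₁ σ₂ : ℝ → ℂ) (μ : ℂ) (z : ℝ → ℂ) : ℝ → ℂ := fun x =>
  ∫ t in x..(1:ℝ), σ₂ t * ∫ s in (0:ℝ)..t,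
    Complex.exp (2 * Complex.I * μ * (t - s)) * σ₁ s * z s

/-- `γ₀₁(x,μ) = |∫₀ˣ e^{2iμ(x−t)} σ₁(t) dt|`. -/
def gamma01 (σ₁ : ℝ → ℂ) (μ : ℂ) (x : ℝ) : ℝ :=
  ‖∫ t in (0:ℝ)..x, Complex.exp (2 * Complex.I * μ * (x - t)) * σ₁ t‖

/-- `γ₀₂(x,μ) = |∫ₓ¹ e^{2iμ(t−x)} σ₂(t) dt|`. -/
def gamma02 (σ₂ : ℝ → ℂ) (μ : ℂ) (x : ℝ) : ℝ :=
  ‖∫ t in x..(1:ℝ), Complex.exp (2 * Complex.I * μ * (t - x)) * σ₂ t‖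

/-- `γ₁(μ) = ‖γ₀₁(·,μ)‖_{L^q[0,1]}`. -/
def gamma1 (σ₁ : ℝ → ℂ) (q : ℝ≥0∞) (μ : ℂ) : ℝ :=
  (eLpNorm (fun x => gamma01 σ₁ μ x) q (volume.restrict (Icc (0:ℝ) 1))).toReal

/-- `γ₂(μ) = ‖γ₀₂(·,μ)‖_{L^q[0,1]}`. -/
def gamma2 (σ₂ : ℝ → ℂ) (q : ℝ≥0∞) (μ : ℂ) : ℝ :=
  (eLpNorm (fun x => gamma02 σ₂ μ x) q (volume.restrict (Icc (0:ℝ) 1))).toReal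

/-- `γ̃(μ) = ∫₀¹ |σ₂| γ₀₁² + ∫₀¹ |σ₁| γ₀₂²`. -/
def gammaT (σ₁ σ₂ : ℝ → ℂ) (μ : ℂ) : ℝ :=
  (∫ s in (0:ℝ)..1, ‖σ₂ s‖ * (gamma01 σ₁ μ s) ^ 2)
    + ∫ s in (0:ℝ)..1, ‖σ₁ s‖ * (gamma02 σ₂ μ s) ^ 2

/-- `‖σ‖_{L^p[0,1]}` where `σ(x) = max(|σ₁(x)|,|σ₂(x)|)`. -/
def sigmaNorm (σ₁ σ₂ : ℝ → ℂ) (p : ℝ≥0∞) : ℝ :=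
  (eLpNorm (fun x => max ‖σ₁ x‖ ‖σ₂ x‖) p (volume.restrict (Icc (0:ℝ) 1))).toReal

/-- The constant function `1` on `[0,1]`. -/
def eFun : ℝ → ℂ := fun _ => 1

/-- A solution of the Dirac system `y₁' + σ₁ y₂ = iμ y₁`, `y₂' + σ₂ y₁ = −iμ y₂` on `[0,1]`,
with `y₁, y₂` absolutely continuous (i.e. in `W^{1,1}[0,1]`, so each is the indefinite
integral of an integrable function, and the equations hold a.e. with those derivatives). -/
def IsDiracSolution (σ₁ σ₂ : ℝ → ℂ) (μ : ℂ) (y₁ y₂ : ℝ → ℂ) : Prop :=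
  ∃ g₁ g₂ : ℝ → ℂ,
    IntervalIntegrable g₁ volume 0 1 ∧ IntervalIntegrable g₂ volume 0 1 ∧
    (∀ x ∈ Icc (0:ℝ) 1, y₁ x = y₁ 0 + ∫ t in (0:ℝ)..x, g₁ t) ∧
    (∀ x ∈ Icc (0:ℝ) 1, y₂ x = y₂ 0 + ∫ t in (0:ℝ)..x, g₂ t) ∧
    (∀ᵐ x ∂(volume.restrict (Icc (0:ℝ) 1)),
      g₁ x + σ₁ x * y₂ x = Complex.I * μ * y₁ x) ∧
    (∀ᵐ x ∂(volume.restrict (Icc (0:ℝ) 1)),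
      g₂ x + σ₂ x * y₁ x = -(Complex.I * μ) * y₂ x)

open MeasureTheory Set


lemma aux_swap (f g : ℝ → ℂ) (hf : IntegrableOn f (Ioc (0:ℝ) 1) volume)
    (hg : IntegrableOn g (Ioc (0:ℝ) 1) volume) :
    ∫ t in (0:ℝ)..1, f t * ∫ u in (0:ℝ)..t, g u
      = ∫ u in (0:ℝ)..1, g u * ∫ t in u..(1:ℝ), f t := by
  set ν := volume.restrict (Ioc (0:ℝ) 1) with hν
  have hs : MeasurableSet {p : ℝ × ℝ | p.2 ≤ p.1} :=
    measurableSet_le measurable_snd measurable_fst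
  set F : ℝ × ℝ → ℂ := {p : ℝ × ℝ | p.2 ≤ p.1}.indicator (fun p => f p.1 * g p.2) with hF
  have hFint : Integrable F (ν.prod ν) :=
    (hf.mul_prod hg).indicator hs
  have swap := MeasureTheory.integral_integral_swap (f := fun t u => F (t, u)) hFint
  have h1 : ∀ t ∈ Ioc (0:ℝ) 1, (∫ u, F (t, u) ∂ν) = f t * ∫ u in (0:ℝ)..t, g u := by
    intro t ht
    have : (fun u => F (t, u)) = (Iic t).indicator (fun u => f t * g u) := by
      funext u
      simp only [hF, Set.indicator_apply, Set.mem_setOf_eq, Set.mem_Iic]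
    rw [this, hν, setIntegral_indicator measurableSet_Iic, Set.Ioc_inter_Iic,
      min_eq_right ht.2, MeasureTheory.integral_const_mul,
      intervalIntegral.integral_of_le ht.1.le]
  have h2 : ∀ u ∈ Ioc (0:ℝ) 1, (∫ t, F (t, u) ∂ν) = g u * ∫ t in u..(1:ℝ), f t := by
    intro u hu
    have heq : (fun t => F (t, u)) = (Ici u).indicator (fun t => f t * g u) := by
      funext t
      simp only [hF, Set.indicator_apply, Set.mem_setOf_eq, Set.mem_Ici]
    have hset : Ioc (0:ℝ) 1 ∩ Ici u = Icc u 1 := by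
      ext x
      simp only [Set.mem_inter_iff, Set.mem_Ioc, Set.mem_Ici, Set.mem_Icc]
      constructor
      · rintro ⟨⟨_, h2⟩, h3⟩; exact ⟨h3, h2⟩
      · rintro ⟨h1, h2⟩; exact ⟨⟨lt_of_lt_of_le hu.1 h1, h2⟩, h1⟩
    rw [heq, hν, setIntegral_indicator measurableSet_Ici, hset,
      integral_Icc_eq_integral_Ioc, intervalIntegral.integral_of_le hu.2]
    simp_rw [mul_comm (f _) (g u)]
    rw [MeasureTheory.integral_const_mul]
  rw [intervalIntegral.integral_of_le (by norm_num : (0:ℝ) ≤ 1),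
    intervalIntegral.integral_of_le (by norm_num : (0:ℝ) ≤ 1)]
  calc ∫ t in Ioc (0:ℝ) 1, f t * ∫ u in (0:ℝ)..t, g u
      = ∫ t, (∫ u, F (t, u) ∂ν) ∂ν := by
        refine setIntegral_congr_ae measurableSet_Ioc ?_
        filter_upwards with t ht using (h1 t ht).symm
    _ = ∫ u, (∫ t, F (t, u) ∂ν) ∂ν := swap
    _ = ∫ u in Ioc (0:ℝ) 1, g u * ∫ t in u..(1:ℝ), f t := by
        refine setIntegral_congr_ae measurableSet_Ioc ?_
        filter_upwards with u hu using h2 u hu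

noncomputable section

lemma re_2Imu (μ z : ℂ) : (2*Complex.I*μ*z).re = -2*μ.im*z.re - 2*μ.re*z.im := by
  simp [Complex.mul_re, Complex.mul_im]

lemma norm_exp_eq (z : ℂ) : ‖Complex.exp z‖ = Real.exp z.re := by
  rw [Complex.norm_exp]

lemma exp_mul_integrable (σ : ℝ → ℂ) (hm : Measurable σ)
    (hI : IntegrableOn σ (Icc (0:ℝ) 1) volume)
    (E : ℝ → ℂ) (hE : Continuous E) :
    IntegrableOn (fun t => E t * σ t) (Ioc (0:ℝ) 1) volume := by
  obtain ⟨C, hC⟩ := isCompact_Icc.exists_bound_of_continuousOn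
    (s := Icc (0:ℝ) 1) hE.continuousOn
  apply Integrable.mono' (((hI.mono_set Ioc_subset_Icc_self).norm).const_mul C)
  · exact (hE.measurable.mul hm).aestronglyMeasurable
  · filter_upwards [ae_restrict_mem measurableSet_Ioc] with t ht
    calc ‖E t * σ t‖ = ‖E t‖ * ‖σ t‖ := norm_mul _ _
      _ ≤ C * ‖σ t‖ :=
        mul_le_mul_of_nonneg_right (hC t (Ioc_subset_Icc_self ht)) (norm_nonneg _)

lemma primitive_cont_right (h : ℝ → ℂ) (hI : Integrable h volume) :
    Continuous fun u => ∫ s in u..(1:ℝ), h s := by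
  have key : ∀ u : ℝ, (∫ s in u..(1:ℝ), h s)
      = (∫ s in (0:ℝ)..1, h s) - ∫ s in (0:ℝ)..u, h s := by
    intro u
    rw [intervalIntegral.integral_interval_sub_left hI.intervalIntegrable
      hI.intervalIntegrable]
  rw [show (fun u => ∫ s in u..(1:ℝ), h s)
      = fun u => (∫ s in (0:ℝ)..1, h s) - ∫ s in (0:ℝ)..u, h s from funext key]
  exact continuous_const.sub (hI.continuous_primitive 0)

/-- The function `u ↦ ∫ₛ¹ e^{2iμ(s−u)} σ(s) ds` agrees on `[0,1]` with a continuous function. -/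
lemma J_eq (σ : ℝ → ℂ) (hm : Measurable σ) (hI : IntegrableOn σ (Icc (0:ℝ) 1) volume) (μ : ℂ) :
    ∃ Φ : ℝ → ℂ, Continuous Φ ∧ ∀ u ∈ Icc (0:ℝ) 1,
      (∫ s in u..(1:ℝ), Complex.exp (2*Complex.I*μ*(s - u)) * σ s) = Φ u := by
  set h₂ : ℝ → ℂ := (Ioc (0:ℝ) 1).indicator
    (fun s => Complex.exp (2*Complex.I*μ*(s:ℂ)) * σ s) with hh₂
  have hEc : Continuous (fun s : ℝ => Complex.exp (2*Complex.I*μ*(s:ℂ))) := by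
    exact Complex.continuous_exp.comp (by continuity)
  have h₂int : Integrable h₂ volume :=
    (exp_mul_integrable σ hm hI _ hEc).integrable_indicator measurableSet_Ioc
  refine ⟨fun u => Complex.exp (-(2*Complex.I*μ*(u:ℂ))) * ∫ s in u..(1:ℝ), h₂ s,
    (Complex.continuous_exp.comp (by continuity)).mul (primitive_cont_right h₂ h₂int), ?_⟩
  intro u hu
  have step1 : (∫ s in u..(1:ℝ), Complex.exp (2*Complex.I*μ*(s - u)) * σ s)
      = ∫ s in u..(1:ℝ), Complex.exp (-(2*Complex.I*μ*(u:ℂ)))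
          * (Complex.exp (2*Complex.I*μ*(s:ℂ)) * σ s) := by
    apply intervalIntegral.integral_congr
    intro s _
    dsimp only
    rw [← mul_assoc, ← Complex.exp_add]
    congr 2
    push_cast
    ring
  rw [step1, intervalIntegral.integral_const_mul]
  congr 1
  rw [intervalIntegral.integral_of_le hu.2, intervalIntegral.integral_of_le hu.2]
  apply setIntegral_congr_fun measurableSet_Ioc
  intro s hs
  exact (Set.indicator_of_mem (show s ∈ Ioc (0:ℝ) 1 from ⟨lt_of_le_of_lt hu.1 hs.1, hs.2⟩)
    (fun s => Complex.exp (2*Complex.I*μ*(s:ℂ)) * σ s)).symm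

/-- The function `u ↦ ∫₀ᵘ e^{2iμ(u−s)} σ(s) ds` agrees on `[0,1]` with a continuous function. -/
lemma J0_eq (σ : ℝ → ℂ) (hm : Measurable σ) (hI : IntegrableOn σ (Icc (0:ℝ) 1) volume) (μ : ℂ) :
    ∃ Φ : ℝ → ℂ, Continuous Φ ∧ ∀ u ∈ Icc (0:ℝ) 1,
      (∫ s in (0:ℝ)..u, Complex.exp (2*Complex.I*μ*(u - s)) * σ s) = Φ u := by
  set h₁ : ℝ → ℂ := (Ioc (0:ℝ) 1).indicator
    (fun s => Complex.exp (-(2*Complex.I*μ*(s:ℂ))) * σ s) with hh₁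
  have hEc : Continuous (fun s : ℝ => Complex.exp (-(2*Complex.I*μ*(s:ℂ)))) := by
    exact Complex.continuous_exp.comp (by continuity)
  have h₁int : Integrable h₁ volume :=
    (exp_mul_integrable σ hm hI _ hEc).integrable_indicator measurableSet_Ioc
  refine ⟨fun u => Complex.exp (2*Complex.I*μ*(u:ℂ)) * ∫ s in (0:ℝ)..u, h₁ s,
    (Complex.continuous_exp.comp (by continuity)).mul (h₁int.continuous_primitive 0), ?_⟩
  intro u hu
  have step1 : (∫ s in (0:ℝ)..u, Complex.exp (2*Complex.I*μ*(u - s)) * σ s)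
      = ∫ s in (0:ℝ)..u, Complex.exp (2*Complex.I*μ*(u:ℂ))
          * (Complex.exp (-(2*Complex.I*μ*(s:ℂ))) * σ s) := by
    apply intervalIntegral.integral_congr
    intro s _
    dsimp only
    rw [← mul_assoc, ← Complex.exp_add]
    congr 2
    push_cast
    ring
  rw [step1, intervalIntegral.integral_const_mul]
  congr 1
  rw [intervalIntegral.integral_of_le hu.1, intervalIntegral.integral_of_le hu.1]
  apply setIntegral_congr_fun measurableSet_Ioc
  intro s hs
  exact (Set.indicator_of_mem (show s ∈ Ioc (0:ℝ) 1 from ⟨hs.1, le_trans hs.2 hu.2⟩)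
    (fun s => Complex.exp (-(2*Complex.I*μ*(s:ℂ))) * σ s)).symm

section Ident
variable (σ₁ σ₂ : ℝ → ℂ) (hσ₁m : Measurable σ₁) (hσ₂m : Measurable σ₂)
  (h1 : IntegrableOn σ₁ (Icc (0:ℝ) 1) volume) (h2 : IntegrableOn σ₂ (Icc (0:ℝ) 1) volume)
  (μ : ℂ)

include hσ₁m hσ₂m h1 h2 in
lemma g1_integrable :
    IntegrableOn (fun u => σ₁ u * ∫ s in u..(1:ℝ),
      Complex.exp (2*Complex.I*μ*(s - u)) * σ₂ s) (Ioc (0:ℝ) 1) volume := by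
  obtain ⟨Φ, hΦc, hΦ⟩ := J_eq σ₂ hσ₂m h2 μ
  obtain ⟨C, hC⟩ := isCompact_Icc.exists_bound_of_continuousOn
    (s := Icc (0:ℝ) 1) hΦc.continuousOn
  apply Integrable.mono' (((h1.mono_set Ioc_subset_Icc_self).norm).mul_const C)
  · apply ((hσ₁m.aestronglyMeasurable.mul hΦc.measurable.aestronglyMeasurable)).congr
    filter_upwards [ae_restrict_mem measurableSet_Ioc] with u hu
    rw [hΦ u (Ioc_subset_Icc_self hu)]; rfl
  · filter_upwards [ae_restrict_mem measurableSet_Ioc] with u hu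
    rw [norm_mul, hΦ u (Ioc_subset_Icc_self hu)]
    exact mul_le_mul_of_nonneg_left (hC u (Ioc_subset_Icc_self hu)) (norm_nonneg _)

include hσ₁m hσ₂m h1 h2 in
lemma g2_integrable :
    IntegrableOn (fun u => σ₂ u * ∫ s in (0:ℝ)..u,
      Complex.exp (2*Complex.I*μ*(u - s)) * σ₁ s) (Ioc (0:ℝ) 1) volume := by
  obtain ⟨Φ, hΦc, hΦ⟩ := J0_eq σ₁ hσ₁m h1 μ
  obtain ⟨C, hC⟩ := isCompact_Icc.exists_bound_of_continuousOn
    (s := Icc (0:ℝ) 1) hΦc.continuousOn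
  apply Integrable.mono' (((h2.mono_set Ioc_subset_Icc_self).norm).mul_const C)
  · apply ((hσ₂m.aestronglyMeasurable.mul hΦc.measurable.aestronglyMeasurable)).congr
    filter_upwards [ae_restrict_mem measurableSet_Ioc] with u hu
    rw [hΦ u (Ioc_subset_Icc_self hu)]; rfl
  · filter_upwards [ae_restrict_mem measurableSet_Ioc] with u hu
    rw [norm_mul, hΦ u (Ioc_subset_Icc_self hu)]
    exact mul_le_mul_of_nonneg_left (hC u (Ioc_subset_Icc_self hu)) (norm_nonneg _)

include hσ₁m hσ₂m h1 h2 in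
lemma ident1 :
    (∫ t in (0:ℝ)..1, Complex.exp (2*Complex.I*μ*t) * σ₂ t * K1 σ₁ σ₂ μ eFun t)
      = ∫ s in (0:ℝ)..1, Complex.exp (2*Complex.I*μ*s) * σ₁ s *
          (∫ t in s..(1:ℝ), Complex.exp (2*Complex.I*μ*(t - s)) * σ₂ t)^2 := by
  have hf : IntegrableOn (fun t : ℝ => Complex.exp (2*Complex.I*μ*(t:ℂ)) * σ₂ t)
      (Ioc (0:ℝ) 1) volume :=
    exp_mul_integrable σ₂ hσ₂m h2 _ (Complex.continuous_exp.comp (by continuity))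
  have hg := g1_integrable σ₁ σ₂ hσ₁m hσ₂m h1 h2 μ
  calc (∫ t in (0:ℝ)..1, Complex.exp (2*Complex.I*μ*t) * σ₂ t * K1 σ₁ σ₂ μ eFun t)
      = ∫ t in (0:ℝ)..1, (fun t : ℝ => Complex.exp (2*Complex.I*μ*(t:ℂ)) * σ₂ t) t *
          ∫ u in (0:ℝ)..t, (fun u => σ₁ u * ∫ s in u..(1:ℝ),
            Complex.exp (2*Complex.I*μ*(s - u)) * σ₂ s) u := by
        apply intervalIntegral.integral_congr
        intro t _
        simp only [K1, eFun, mul_one]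
    _ = ∫ u in (0:ℝ)..1, (fun u => σ₁ u * ∫ s in u..(1:ℝ),
          Complex.exp (2*Complex.I*μ*(s - u)) * σ₂ s) u *
            ∫ t in u..(1:ℝ), (fun t : ℝ => Complex.exp (2*Complex.I*μ*(t:ℂ)) * σ₂ t) t :=
        aux_swap _ _ hf hg
    _ = ∫ s in (0:ℝ)..1, Complex.exp (2*Complex.I*μ*s) * σ₁ s *
          (∫ t in s..(1:ℝ), Complex.exp (2*Complex.I*μ*(t - s)) * σ₂ t)^2 := by
        apply intervalIntegral.integral_congr
        intro u _
        dsimp only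
        have key : (∫ t in u..(1:ℝ), Complex.exp (2*Complex.I*μ*(t:ℂ)) * σ₂ t)
            = Complex.exp (2*Complex.I*μ*(u:ℂ)) *
              ∫ s in u..(1:ℝ), Complex.exp (2*Complex.I*μ*(s - u)) * σ₂ s := by
          rw [← intervalIntegral.integral_const_mul]
          apply intervalIntegral.integral_congr
          intro s _
          dsimp only
          rw [← mul_assoc, ← Complex.exp_add]
          congr 2
          ring
        rw [key]
        ring

include hσ₁m hσ₂m h1 h2 in
lemma ident2 :
    (Complex.exp (2*Complex.I*μ) *
        ∫ t in (0:ℝ)..1, Complex.exp (-(2*Complex.I*μ*t)) * σ₁ t * K2 σ₁ σ₂ μ eFun t)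
      = ∫ s in (0:ℝ)..1, Complex.exp (2*Complex.I*μ*(1 - s)) * σ₂ s *
          (∫ t in (0:ℝ)..s, Complex.exp (2*Complex.I*μ*(s - t)) * σ₁ t)^2 := by
  have hf : IntegrableOn (fun t : ℝ => Complex.exp (-(2*Complex.I*μ*(t:ℂ))) * σ₁ t)
      (Ioc (0:ℝ) 1) volume :=
    exp_mul_integrable σ₁ hσ₁m h1 _ (Complex.continuous_exp.comp (by continuity))
  have hg := g2_integrable σ₁ σ₂ hσ₁m hσ₂m h1 h2 μ
  have swap := aux_swap (fun u => σ₂ u * ∫ s in (0:ℝ)..u,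
      Complex.exp (2*Complex.I*μ*(u - s)) * σ₁ s)
    (fun t : ℝ => Complex.exp (-(2*Complex.I*μ*(t:ℂ))) * σ₁ t) hg hf
  calc (Complex.exp (2*Complex.I*μ) *
        ∫ t in (0:ℝ)..1, Complex.exp (-(2*Complex.I*μ*t)) * σ₁ t * K2 σ₁ σ₂ μ eFun t)
      = Complex.exp (2*Complex.I*μ) *
          ∫ u in (0:ℝ)..1, (fun t : ℝ => Complex.exp (-(2*Complex.I*μ*(t:ℂ))) * σ₁ t) u *
            ∫ t in u..(1:ℝ), (fun u => σ₂ u * ∫ s in (0:ℝ)..u,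
              Complex.exp (2*Complex.I*μ*(u - s)) * σ₁ s) t := by
        congr 1
        apply intervalIntegral.integral_congr
        intro t _
        simp only [K2, eFun, mul_one]
    _ = Complex.exp (2*Complex.I*μ) *
          ∫ t in (0:ℝ)..1, (fun u => σ₂ u * ∫ s in (0:ℝ)..u,
              Complex.exp (2*Complex.I*μ*(u - s)) * σ₁ s) t *
            ∫ u in (0:ℝ)..t, (fun t : ℝ => Complex.exp (-(2*Complex.I*μ*(t:ℂ))) * σ₁ t) u := by
        rw [swap]
    _ = ∫ t in (0:ℝ)..1, Complex.exp (2*Complex.I*μ) *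
          ((fun u => σ₂ u * ∫ s in (0:ℝ)..u,
              Complex.exp (2*Complex.I*μ*(u - s)) * σ₁ s) t *
            ∫ u in (0:ℝ)..t, (fun t : ℝ => Complex.exp (-(2*Complex.I*μ*(t:ℂ))) * σ₁ t) u) := by
        rw [intervalIntegral.integral_const_mul]
    _ = ∫ s in (0:ℝ)..1, Complex.exp (2*Complex.I*μ*(1 - s)) * σ₂ s *
          (∫ t in (0:ℝ)..s, Complex.exp (2*Complex.I*μ*(s - t)) * σ₁ t)^2 := by
        apply intervalIntegral.integral_congr
        intro u _
        dsimp only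
        have key : (∫ t in (0:ℝ)..u, Complex.exp (-(2*Complex.I*μ*(t:ℂ))) * σ₁ t)
            = Complex.exp (-(2*Complex.I*μ*(u:ℂ))) *
              ∫ s in (0:ℝ)..u, Complex.exp (2*Complex.I*μ*(u - s)) * σ₁ s := by
          rw [← intervalIntegral.integral_const_mul]
          apply intervalIntegral.integral_congr
          intro s _
          dsimp only
          rw [← mul_assoc, ← Complex.exp_add]
          congr 2
          ring
        have keyexp : Complex.exp (2*Complex.I*μ*(1 - (u:ℂ)))
            = Complex.exp (2*Complex.I*μ) * Complex.exp (-(2*Complex.I*μ*(u:ℂ))) := by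
          rw [← Complex.exp_add]
          congr 1
          ring
        rw [key, keyexp]
        ring
end Ident
section Bounds
variable (σ₁ σ₂ : ℝ → ℂ) (hσ₁m : Measurable σ₁) (hσ₂m : Measurable σ₂)
  (h1 : IntegrableOn σ₁ (Icc (0:ℝ) 1) volume) (h2 : IntegrableOn σ₂ (Icc (0:ℝ) 1) volume)
  (μ : ℂ)

include hσ₁m hσ₂m h1 h2 in
lemma bound2_integrable :
    IntegrableOn (fun s => ‖σ₁ s‖ * gamma02 σ₂ μ s ^ 2) (Icc (0:ℝ) 1) volume := by
  obtain ⟨Φ, hΦc, hΦ⟩ := J_eq σ₂ hσ₂m h2 μ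
  have hγ : ∀ s ∈ Icc (0:ℝ) 1, gamma02 σ₂ μ s = ‖Φ s‖ := by
    intro s hs
    rw [gamma02, hΦ s hs]
  obtain ⟨C, hC⟩ := isCompact_Icc.exists_bound_of_continuousOn
    (s := Icc (0:ℝ) 1) hΦc.continuousOn
  apply Integrable.mono' (h1.norm.mul_const (C^2))
  · apply ((hσ₁m.norm.mul ((hΦc.measurable.norm).pow_const 2)).aestronglyMeasurable).congr
    filter_upwards [ae_restrict_mem measurableSet_Icc] with s hs
    rw [hγ s hs]; rfl
  · filter_upwards [ae_restrict_mem measurableSet_Icc] with s hs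
    have hnn : (0:ℝ) ≤ ‖σ₁ s‖ * gamma02 σ₂ μ s ^ 2 := by positivity
    rw [Real.norm_eq_abs, abs_of_nonneg hnn, hγ s hs]
    exact mul_le_mul_of_nonneg_left
      (pow_le_pow_left₀ (norm_nonneg _) (hC s hs) 2) (norm_nonneg _)

include hσ₁m hσ₂m h1 h2 in
lemma bound1_integrable :
    IntegrableOn (fun s => ‖σ₂ s‖ * gamma01 σ₁ μ s ^ 2) (Icc (0:ℝ) 1) volume := by
  obtain ⟨Φ, hΦc, hΦ⟩ := J0_eq σ₁ hσ₁m h1 μ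
  have hγ : ∀ s ∈ Icc (0:ℝ) 1, gamma01 σ₁ μ s = ‖Φ s‖ := by
    intro s hs
    rw [gamma01, hΦ s hs]
  obtain ⟨C, hC⟩ := isCompact_Icc.exists_bound_of_continuousOn
    (s := Icc (0:ℝ) 1) hΦc.continuousOn
  apply Integrable.mono' (h2.norm.mul_const (C^2))
  · apply ((hσ₂m.norm.mul ((hΦc.measurable.norm).pow_const 2)).aestronglyMeasurable).congr
    filter_upwards [ae_restrict_mem measurableSet_Icc] with s hs
    rw [hγ s hs]; rfl
  · filter_upwards [ae_restrict_mem measurableSet_Icc] with s hs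
    have hnn : (0:ℝ) ≤ ‖σ₂ s‖ * gamma01 σ₁ μ s ^ 2 := by positivity
    rw [Real.norm_eq_abs, abs_of_nonneg hnn, hγ s hs]
    exact mul_le_mul_of_nonneg_left
      (pow_le_pow_left₀ (norm_nonneg _) (hC s hs) 2) (norm_nonneg _)

end Bounds

/-- two exact identities and the resulting `γ̃` bounds in the half-plane. -/
theorem stmt3
    (p : ℝ≥0∞) (hp1 : 1 ≤ p) (hp2 : p < 2)
    (σ₁ σ₂ : ℝ → ℂ) (hσ₁m : Measurable σ₁) (hσ₂m : Measurable σ₂)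
    (hσ₁ : MemLp σ₁ p (volume.restrict (Icc (0:ℝ) 1)))
    (hσ₂ : MemLp σ₂ p (volume.restrict (Icc (0:ℝ) 1))) :
    (∀ μ : ℂ,
      ((∫ t in (0:ℝ)..1, Complex.exp (2*Complex.I*μ*t) * σ₂ t * K1 σ₁ σ₂ μ eFun t)
        = ∫ s in (0:ℝ)..1, Complex.exp (2*Complex.I*μ*s) * σ₁ s *
            (∫ t in s..(1:ℝ), Complex.exp (2*Complex.I*μ*(t - s)) * σ₂ t)^2)
      ∧ (Complex.exp (2*Complex.I*μ) *
          ∫ t in (0:ℝ)..1, Complex.exp (-(2*Complex.I*μ*t)) * σ₁ t * K2 σ₁ σ₂ μ eFun t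
        = ∫ s in (0:ℝ)..1, Complex.exp (2*Complex.I*μ*(1 - s)) * σ₂ s *
            (∫ t in (0:ℝ)..s, Complex.exp (2*Complex.I*μ*(s - t)) * σ₁ t)^2))
    ∧ (∀ r : ℝ, 0 ≤ r → ∀ μ : ℂ, -r < μ.im →
        ‖∫ t in (0:ℝ)..1, Complex.exp (2*Complex.I*μ*t) * σ₂ t * K1 σ₁ σ₂ μ eFun t‖
            ≤ Real.exp (2*r) * gammaT σ₁ σ₂ μ
        ∧ ‖Complex.exp (2*Complex.I*μ) *
            ∫ t in (0:ℝ)..1, Complex.exp (-(2*Complex.I*μ*t)) * σ₁ t * K2 σ₁ σ₂ μ eFun t‖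
            ≤ Real.exp (2*r) * gammaT σ₁ σ₂ μ) := by
  haveI : Fact (volume (Icc (0:ℝ) 1) < ⊤) :=
    ⟨by rw [Real.volume_Icc]; exact ENNReal.ofReal_lt_top⟩
  have h1 : IntegrableOn σ₁ (Icc (0:ℝ) 1) volume := hσ₁.integrable hp1
  have h2 : IntegrableOn σ₂ (Icc (0:ℝ) 1) volume := hσ₂.integrable hp1
  have hId1 := ident1 σ₁ σ₂ hσ₁m hσ₂m h1 h2
  have hId2 := ident2 σ₁ σ₂ hσ₁m hσ₂m h1 h2
  refine ⟨fun μ => ⟨hId1 μ, hId2 μ⟩, ?_⟩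
  intro r hr μ hμ
  have hIoc : Set.uIoc (0:ℝ) 1 = Ioc (0:ℝ) 1 := uIoc_of_le (by norm_num)
  have hA : (0:ℝ) ≤ ∫ s in (0:ℝ)..1, ‖σ₂ s‖ * gamma01 σ₁ μ s ^ 2 :=
    intervalIntegral.integral_nonneg (by norm_num) (fun u _ => by positivity)
  have hB : (0:ℝ) ≤ ∫ s in (0:ℝ)..1, ‖σ₁ s‖ * gamma02 σ₂ μ s ^ 2 :=
    intervalIntegral.integral_nonneg (by norm_num) (fun u _ => by positivity)
  constructor
  · rw [hId1 μ]
    have hbb : IntervalIntegrable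
        (fun s => Real.exp (2*r) * (‖σ₁ s‖ * gamma02 σ₂ μ s ^ 2)) volume 0 1 := by
      rw [intervalIntegrable_iff', uIcc_of_le (by norm_num : (0:ℝ) ≤ 1)]
      exact (bound2_integrable σ₁ σ₂ hσ₁m hσ₂m h1 h2 μ).const_mul _
    have hptw : ∀ᵐ s : ℝ ∂(volume.restrict (Set.uIoc (0:ℝ) 1)),
        ‖Complex.exp (2*Complex.I*μ*s) * σ₁ s *
          (∫ t in s..(1:ℝ), Complex.exp (2*Complex.I*μ*(t - s)) * σ₂ t)^2‖
          ≤ Real.exp (2*r) * (‖σ₁ s‖ * gamma02 σ₂ μ s ^ 2) := by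
      rw [hIoc]
      filter_upwards [ae_restrict_mem measurableSet_Ioc] with s hs
      rw [norm_mul, norm_mul, norm_pow]
      have hg02 : ‖∫ t in s..(1:ℝ), Complex.exp (2*Complex.I*μ*(t - s)) * σ₂ t‖
          = gamma02 σ₂ μ s := rfl
      have hexp : ‖Complex.exp (2*Complex.I*μ*(s:ℂ))‖ ≤ Real.exp (2*r) := by
        rw [norm_exp_eq, re_2Imu]
        simp only [Complex.ofReal_re, Complex.ofReal_im, mul_zero, sub_zero]
        apply Real.exp_le_exp.2
        nlinarith [mul_nonneg hs.1.le (by linarith : (0:ℝ) ≤ μ.im + r),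
          mul_nonneg hr (by linarith [hs.2] : (0:ℝ) ≤ 1 - s)]
      rw [hg02, show Real.exp (2*r) * (‖σ₁ s‖ * gamma02 σ₂ μ s ^ 2)
          = Real.exp (2*r) * ‖σ₁ s‖ * gamma02 σ₂ μ s ^ 2 from (mul_assoc _ _ _).symm]
      exact mul_le_mul_of_nonneg_right
        (mul_le_mul_of_nonneg_right hexp (norm_nonneg _)) (by positivity)
    refine (intervalIntegral.norm_integral_le_abs_of_norm_le hptw hbb).trans ?_
    rw [intervalIntegral.integral_const_mul,
      abs_of_nonneg (mul_nonneg (Real.exp_nonneg _) hB)]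
    simp only [gammaT]
    exact mul_le_mul_of_nonneg_left (le_add_of_nonneg_left hA) (Real.exp_nonneg _)
  · rw [hId2 μ]
    have hbb : IntervalIntegrable
        (fun s => Real.exp (2*r) * (‖σ₂ s‖ * gamma01 σ₁ μ s ^ 2)) volume 0 1 := by
      rw [intervalIntegrable_iff', uIcc_of_le (by norm_num : (0:ℝ) ≤ 1)]
      exact (bound1_integrable σ₁ σ₂ hσ₁m hσ₂m h1 h2 μ).const_mul _
    have hptw : ∀ᵐ s : ℝ ∂(volume.restrict (Set.uIoc (0:ℝ) 1)),
        ‖Complex.exp (2*Complex.I*μ*(1 - s)) * σ₂ s *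
          (∫ t in (0:ℝ)..s, Complex.exp (2*Complex.I*μ*(s - t)) * σ₁ t)^2‖
          ≤ Real.exp (2*r) * (‖σ₂ s‖ * gamma01 σ₁ μ s ^ 2) := by
      rw [hIoc]
      filter_upwards [ae_restrict_mem measurableSet_Ioc] with s hs
      rw [norm_mul, norm_mul, norm_pow]
      have hg01 : ‖∫ t in (0:ℝ)..s, Complex.exp (2*Complex.I*μ*(s - t)) * σ₁ t‖
          = gamma01 σ₁ μ s := rfl
      have hexp : ‖Complex.exp (2*Complex.I*μ*(1 - (s:ℂ)))‖ ≤ Real.exp (2*r) := by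
        rw [norm_exp_eq, re_2Imu]
        simp only [Complex.sub_re, Complex.one_re, Complex.ofReal_re, Complex.sub_im,
          Complex.one_im, Complex.ofReal_im, sub_self, mul_zero, sub_zero]
        apply Real.exp_le_exp.2
        nlinarith [mul_nonneg (by linarith [hs.2] : (0:ℝ) ≤ 1 - s)
            (by linarith : (0:ℝ) ≤ μ.im + r),
          mul_nonneg hr hs.1.le]
      rw [hg01, show Real.exp (2*r) * (‖σ₂ s‖ * gamma01 σ₁ μ s ^ 2)
          = Real.exp (2*r) * ‖σ₂ s‖ * gamma01 σ₁ μ s ^ 2 from (mul_assoc _ _ _).symm]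
      exact mul_le_mul_of_nonneg_right
        (mul_le_mul_of_nonneg_right hexp (norm_nonneg _)) (by positivity)
    refine (intervalIntegral.norm_integral_le_abs_of_norm_le hptw hbb).trans ?_
    rw [intervalIntegral.integral_const_mul,
      abs_of_nonneg (mul_nonneg (Real.exp_nonneg _) hA)]
    simp only [gammaT]
    exact mul_le_mul_of_nonneg_left (le_add_of_nonneg_right hB) (Real.exp_nonneg _)
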